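/- arXiv:1407.3672 — 2 statements merged into one kernel-verified Lean document; each statement's English description precedes it below -/
import Mathlib

section
/- Let Ω_{u,v} = {(x,z) : x ∈ (−1,1), v(x) < z < u(x)} with u, v ∈ C¹, −1 ≤ v < u ≤ 0, and let φ ∈ W²₂(Ω_{u,v}) ∩ C(closure) satisfy ε²φ_xx + φ_zz = 0 in Ω_{u,v}, φ(±1, z) = 1+z, φ(x,u(x)) = 1, φ(x,v(x)) = 0. Suppose n ∈ 2ℕ is even and v(x) ≤ −xⁿ, u(x) ≥ xⁿ − 1 on (−1,1). Then xⁿ + z ≤ φ(x,z) ≤ 2 + z − xⁿ for all (x,z) in the closure of Ω_{u,v}. -/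
open Set Filter Topology

lemma locmin_second_deriv_nonneg (f f' : ℝ → ℝ) {a c : ℝ}
    (hd : ∀ᶠ t in 𝓝 a, HasDerivAt f (f' t) t)
    (hd2 : HasDerivAt f' c a) (hmin : IsLocalMin f a) : 0 ≤ c := by
  by_contra hc
  push_neg at hc
  have hfa : f' a = 0 := hmin.hasDerivAt_eq_zero hd.self_of_nhds
  have hs : Tendsto (fun t => (f' t - f' a) / (t - a)) (𝓝[>] a) (𝓝 c) := by
    have h := hasDerivAt_iff_tendsto_slope.1 hd2
    have h2 : Tendsto (slope f' a) (𝓝[>] a) (𝓝 c) :=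
      h.mono_left (nhdsWithin_mono a (fun t (ht : a < t) => ne_of_gt ht))
    refine h2.congr (fun t => ?_)
    simp [slope_def_field, div_eq_div_iff]
  have hev1 : ∀ᶠ t in 𝓝[>] a, (f' t - f' a) / (t - a) < 0 := hs.eventually_lt_const hc
  have hev2 : ∀ᶠ t in 𝓝[>] a, HasDerivAt f (f' t) t := hd.filter_mono nhdsWithin_le_nhds
  have hev3 : ∀ᶠ t in 𝓝[>] a, f a ≤ f t := hmin.filter_mono nhdsWithin_le_nhds
  have hev4 : ∀ᶠ t in 𝓝[>] a, a < t := eventually_mem_nhdsWithin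
  have H := ((hev1.and hev2).and (hev3.and hev4))
  obtain ⟨b, hb, hsub⟩ := mem_nhdsGT_iff_exists_Ioc_subset.1 H
  have hab : a < b := hb
  have hf' : ∀ t ∈ Ioc a b, f' t < 0 := by
    intro t ht
    obtain ⟨⟨h1, _⟩, _, h4⟩ := hsub ht
    have : f' t / (t - a) < 0 := by simpa [hfa] using h1
    rcases div_neg_iff.1 this with ⟨_, h⟩ | ⟨h, _⟩
    · linarith
    · exact h
  have hcont : ContinuousOn f (Icc a b) := by
    intro t ht
    rcases eq_or_lt_of_le ht.1 with rfl | hlt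
    · exact hd.self_of_nhds.continuousAt.continuousWithinAt
    · exact ((hsub ⟨hlt, ht.2⟩).1.2).continuousAt.continuousWithinAt
  have hanti : StrictAntiOn f (Icc a b) := by
    apply strictAntiOn_of_deriv_neg (convex_Icc a b) hcont
    intro t ht
    rw [interior_Icc] at ht
    have htm : t ∈ Ioc a b := ⟨ht.1, ht.2.le⟩
    rw [(hsub htm).1.2.deriv]
    exact hf' t htm
  have h1 : f b < f a := hanti (left_mem_Icc.2 hab.le) (right_mem_Icc.2 hab.le) hab
  have h2 : f a ≤ f b := (hsub ⟨hab, le_refl b⟩).2.1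
  linarith

lemma weak_min_principle (ε : ℝ) (hε : 0 < ε) (Ω : Set (ℝ × ℝ)) (hO : IsOpen Ω)
    (hbox : Ω ⊆ Icc (-1:ℝ) 1 ×ˢ Icc (-1:ℝ) 0)
    (W Wx Wz Wxx Wzz : ℝ × ℝ → ℝ)
    (hc : ContinuousOn W (closure Ω))
    (hWx : ∀ p ∈ Ω, HasDerivAt (fun t => W (t, p.2)) (Wx p) p.1)
    (hWxx : ∀ p ∈ Ω, HasDerivAt (fun t => Wx (t, p.2)) (Wxx p) p.1)
    (hWz : ∀ p ∈ Ω, HasDerivAt (fun t => W (p.1, t)) (Wz p) p.2)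
    (hWzz : ∀ p ∈ Ω, HasDerivAt (fun t => Wz (p.1, t)) (Wzz p) p.2)
    (hsub : ∀ p ∈ Ω, ε^2 * Wxx p + Wzz p ≤ 0)
    (hbd : ∀ p ∈ closure Ω \ Ω, 0 ≤ W p) :
    ∀ p ∈ closure Ω, 0 ≤ W p := by
  intro p hp
  have hclbox : closure Ω ⊆ Icc (-1:ℝ) 1 ×ˢ Icc (-1:ℝ) 0 :=
    closure_minimal hbox (isClosed_Icc.prod isClosed_Icc)
  have hK : IsCompact (closure Ω) :=
    (isCompact_Icc.prod isCompact_Icc).of_isClosed_subset isClosed_closure hclbox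
  have key : ∀ δ : ℝ, 0 < δ → -δ ≤ W p := by
    intro δ hδ
    set V : ℝ × ℝ → ℝ := fun q => W q - δ * q.1 ^ 2 with hV
    have hVc : ContinuousOn V (closure Ω) := by
      exact hc.sub (Continuous.continuousOn (by fun_prop))
    obtain ⟨p₀, hp₀, hmin⟩ := hK.exists_isMinOn ⟨p, hp⟩ hVc
    have hp₀Ω : p₀ ∉ Ω := by
      intro hmem
      have hnhds : closure Ω ∈ 𝓝 p₀ :=
        mem_of_superset (hO.mem_nhds hmem) subset_closure
      have hloc : IsLocalMin V p₀ := hmin.isLocalMin hnhds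
      -- x-direction
      have hmemx : ∀ᶠ t in 𝓝 p₀.1, (t, p₀.2) ∈ Ω := by
        have hco : Continuous (fun t : ℝ => ((t, p₀.2) : ℝ × ℝ)) := by fun_prop
        have := (hO.preimage hco).mem_nhds (by simpa using hmem)
        exact this
      have hlocx : IsLocalMin (fun t => V (t, p₀.2)) p₀.1 := by
        have hco : ContinuousAt (fun t : ℝ => ((t, p₀.2) : ℝ × ℝ)) p₀.1 := by fun_prop
        have := hco.tendsto.eventually hloc
        simpa [IsLocalMin, IsMinFilter] using this
      have hdx : ∀ᶠ t in 𝓝 p₀.1,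
          HasDerivAt (fun s => V (s, p₀.2)) (Wx (t, p₀.2) - δ * (2 * t)) t := by
        filter_upwards [hmemx] with t ht
        exact (hWx _ ht).sub (((hasDerivAt_pow 2 t).const_mul δ).congr_deriv (by ring))
      have hd2x : HasDerivAt (fun t => Wx (t, p₀.2) - δ * (2 * t))
          (Wxx p₀ - δ * 2) p₀.1 := by
        have h1 := hWxx p₀ hmem
        have h2 : HasDerivAt (fun t : ℝ => δ * (2 * t)) (δ * 2) p₀.1 := by
          simpa using ((hasDerivAt_id p₀.1).const_mul 2).const_mul δ
        exact h1.sub h2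
      have hxx : 0 ≤ Wxx p₀ - δ * 2 :=
        locmin_second_deriv_nonneg _ _ hdx hd2x hlocx
      -- z-direction
      have hmemz : ∀ᶠ t in 𝓝 p₀.2, (p₀.1, t) ∈ Ω := by
        have hco : Continuous (fun t : ℝ => ((p₀.1, t) : ℝ × ℝ)) := by fun_prop
        exact (hO.preimage hco).mem_nhds (by simpa using hmem)
      have hlocz : IsLocalMin (fun t => V (p₀.1, t)) p₀.2 := by
        have hco : ContinuousAt (fun t : ℝ => ((p₀.1, t) : ℝ × ℝ)) p₀.2 := by fun_prop
        have := hco.tendsto.eventually hloc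
        simpa [IsLocalMin, IsMinFilter] using this
      have hdz : ∀ᶠ t in 𝓝 p₀.2,
          HasDerivAt (fun s => V (p₀.1, s)) (Wz (p₀.1, t)) t := by
        filter_upwards [hmemz] with t ht
        exact (hWz _ ht).sub_const (δ * p₀.1 ^ 2)
      have hzz : 0 ≤ Wzz p₀ :=
        locmin_second_deriv_nonneg _ _ hdz (hWzz p₀ hmem) hlocz
      have h := hsub p₀ hmem
      nlinarith [pow_pos hε 2, mul_le_mul_of_nonneg_left (by linarith : (2:ℝ)*δ ≤ Wxx p₀) (le_of_lt (pow_pos hε 2))]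
    have hb0 : 0 ≤ W p₀ := hbd p₀ ⟨hp₀, hp₀Ω⟩
    have hx1 : p₀.1 ^ 2 ≤ 1 := by
      have := (hclbox hp₀).1
      simp only [mem_Icc] at this
      nlinarith [this.1, this.2]
    have hVp₀ : -δ ≤ V p₀ := by simp only [hV]; nlinarith
    have h5 : W p₀ - δ * p₀.1 ^ 2 ≤ W p - δ * p.1 ^ 2 := hmin hp
    simp only [hV] at hVp₀
    nlinarith [mul_nonneg hδ.le (sq_nonneg p.1)]
  by_contra hneg
  push_neg at hneg
  have := key (-W p / 2) (by linarith)
  linarith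

/-- Barrier bounds for the electrostatic potential via the weak maximum
principle: `xⁿ + z ≤ φ(x,z) ≤ 2 + z - xⁿ` on the closure of `Ω_{u,v}`. -/
theorem potential_barrier_bounds (u v : ℝ → ℝ) (φ φx φz φxx φzz : ℝ × ℝ → ℝ)
    (ε : ℝ) (hε : 0 < ε) (n : ℕ) (hn : Even n)
    (Ω : Set (ℝ × ℝ))
    (hΩ : Ω = {p : ℝ × ℝ | p.1 ∈ Set.Ioo (-1:ℝ) 1 ∧ p.2 ∈ Set.Ioo (v p.1) (u p.1)})
    (hu : ContinuousOn u (Set.Icc (-1) 1)) (hv : ContinuousOn v (Set.Icc (-1) 1))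
    (huv : ∀ x ∈ Set.Icc (-1:ℝ) 1, -1 ≤ v x ∧ v x < u x ∧ u x ≤ 0)
    (hφc : ContinuousOn φ (closure Ω))
    (hφx : ∀ p ∈ Ω, HasDerivAt (fun t => φ (t, p.2)) (φx p) p.1)
    (hφxx : ∀ p ∈ Ω, HasDerivAt (fun t => φx (t, p.2)) (φxx p) p.1)
    (hφz : ∀ p ∈ Ω, HasDerivAt (fun t => φ (p.1, t)) (φz p) p.2)
    (hφzz : ∀ p ∈ Ω, HasDerivAt (fun t => φz (p.1, t)) (φzz p) p.2)
    (hharm : ∀ p ∈ Ω, ε^2 * φxx p + φzz p = 0)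
    (hbd1 : ∀ z ∈ Set.Icc (v 1) (u 1), φ (1, z) = 1 + z)
    (hbd2 : ∀ z ∈ Set.Icc (v (-1)) (u (-1)), φ (-1, z) = 1 + z)
    (hbd3 : ∀ x ∈ Set.Icc (-1:ℝ) 1, φ (x, u x) = 1)
    (hbd4 : ∀ x ∈ Set.Icc (-1:ℝ) 1, φ (x, v x) = 0)
    (hvn : ∀ x ∈ Set.Ioo (-1:ℝ) 1, v x ≤ -x^n)
    (hun : ∀ x ∈ Set.Ioo (-1:ℝ) 1, x^n - 1 ≤ u x) :
    ∀ p ∈ closure Ω, p.1^n + p.2 ≤ φ p ∧ φ p ≤ 2 + p.2 - p.1^n := by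
  -- basic geometry
  have hopen : IsOpen Ω := by
    rw [isOpen_iff_mem_nhds]
    intro q hq
    rw [hΩ] at hq ⊢
    obtain ⟨hx, hz⟩ := hq
    have hcu : ContinuousAt u q.1 := hu.continuousAt (Icc_mem_nhds hx.1 hx.2)
    have hcv : ContinuousAt v q.1 := hv.continuousAt (Icc_mem_nhds hx.1 hx.2)
    have h1 : ∀ᶠ r : ℝ × ℝ in 𝓝 q, r.1 ∈ Ioo (-1:ℝ) 1 :=
      continuous_fst.continuousAt.eventually_mem (isOpen_Ioo.mem_nhds hx)
    have h2 : ∀ᶠ r : ℝ × ℝ in 𝓝 q, v r.1 < r.2 := by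
      have hg : ContinuousAt (fun r : ℝ × ℝ => r.2 - v r.1) q :=
        continuous_snd.continuousAt.sub (hcv.comp continuous_fst.continuousAt)
      have hpos : (0:ℝ) < q.2 - v q.1 := by simp only [sub_pos]; exact hz.1
      filter_upwards [hg.tendsto.eventually (eventually_gt_nhds hpos)] with r hr
      linarith [hr]
    have h3 : ∀ᶠ r : ℝ × ℝ in 𝓝 q, r.2 < u r.1 := by
      have hg : ContinuousAt (fun r : ℝ × ℝ => u r.1 - r.2) q :=
        (hcu.comp continuous_fst.continuousAt).sub continuous_snd.continuousAt
      have hpos : (0:ℝ) < u q.1 - q.2 := by simp only [sub_pos]; exact hz.2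
      filter_upwards [hg.tendsto.eventually (eventually_gt_nhds hpos)] with r hr
      linarith [hr]
    filter_upwards [h1, h2, h3] with r hr1 hr2 hr3
    exact ⟨hr1, hr2, hr3⟩
  have hbox : Ω ⊆ Icc (-1:ℝ) 1 ×ˢ Icc (-1:ℝ) 0 := by
    intro q hq
    rw [hΩ] at hq
    obtain ⟨hx, hz⟩ := hq
    have h := huv q.1 (Ioo_subset_Icc_self hx)
    exact ⟨Ioo_subset_Icc_self hx, ⟨by linarith [hz.1], by linarith [hz.2]⟩⟩
  have hKclosed : IsClosed {q : ℝ × ℝ | q.1 ∈ Icc (-1:ℝ) 1 ∧ v q.1 ≤ q.2 ∧ q.2 ≤ u q.1} := by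
    have hcont : ContinuousOn (fun q : ℝ × ℝ => (q.2 - v q.1, u q.1 - q.2))
        (Icc (-1:ℝ) 1 ×ˢ (univ : Set ℝ)) := by
      apply ContinuousOn.prodMk
      · exact continuous_snd.continuousOn.sub
          (hv.comp continuous_fst.continuousOn (fun q hq => hq.1))
      · exact (hu.comp continuous_fst.continuousOn (fun q hq => hq.1)).sub
          continuous_snd.continuousOn
    have h := hcont.preimage_isClosed_of_isClosed (isClosed_Icc.prod isClosed_univ)
        (isClosed_Ici.prod isClosed_Ici) (t := Ici (0:ℝ) ×ˢ Ici (0:ℝ))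
    convert h using 1
    ext q
    simp only [mem_setOf_eq, mem_inter_iff, mem_prod, mem_preimage, mem_Ici, mem_univ,
      and_true, sub_nonneg]
  have hKcl : closure Ω ⊆ {q : ℝ × ℝ | q.1 ∈ Icc (-1:ℝ) 1 ∧ v q.1 ≤ q.2 ∧ q.2 ≤ u q.1} := by
    apply closure_minimal _ hKclosed
    intro q hq
    rw [hΩ] at hq
    exact ⟨Ioo_subset_Icc_self hq.1, le_of_lt hq.2.1, le_of_lt hq.2.2⟩
  have hxn : ∀ x ∈ Icc (-1:ℝ) 1, 0 ≤ x^n ∧ x^n ≤ 1 := by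
    intro x hx
    refine ⟨hn.pow_nonneg x, ?_⟩
    calc x^n ≤ |x^n| := le_abs_self _
      _ = |x|^n := by rw [abs_pow]
      _ ≤ 1 := pow_le_one₀ (abs_nonneg x) (abs_le.2 ⟨hx.1, hx.2⟩)
  -- case analysis for frontier points
  have hfront : ∀ q ∈ closure Ω \ Ω,
      (q = ((1:ℝ), q.2) ∧ q.2 ∈ Icc (v 1) (u 1)) ∨
      (q = ((-1:ℝ), q.2) ∧ q.2 ∈ Icc (v (-1)) (u (-1))) ∨
      (q.1 ∈ Ioo (-1:ℝ) 1 ∧ q = (q.1, u q.1)) ∨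
      (q.1 ∈ Ioo (-1:ℝ) 1 ∧ q = (q.1, v q.1)) := by
    rintro q ⟨hqc, hqn⟩
    obtain ⟨hx, hv2, hu2⟩ := hKcl hqc
    rcases eq_or_lt_of_le hx.1 with he | h1
    · right; left
      refine ⟨Prod.ext he.symm rfl, ?_⟩
      rw [← he] at hv2 hu2; exact ⟨hv2, hu2⟩
    rcases eq_or_lt_of_le hx.2 with he | h2
    · left
      refine ⟨Prod.ext he rfl, ?_⟩
      rw [he] at hv2 hu2; exact ⟨hv2, hu2⟩
    have hio : q.1 ∈ Ioo (-1:ℝ) 1 := ⟨h1, h2⟩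
    have : ¬(v q.1 < q.2 ∧ q.2 < u q.1) := by
      intro hcon
      exact hqn (by rw [hΩ]; exact ⟨hio, hcon⟩)
    rcases eq_or_lt_of_le hv2 with he | hv3
    · right; right; right; exact ⟨hio, Prod.ext rfl he.symm⟩
    rcases eq_or_lt_of_le hu2 with he | hu3
    · right; right; left; exact ⟨hio, Prod.ext rfl he⟩
    exact absurd ⟨hv3, hu3⟩ this
  have hevenpow : ∀ x : ℝ, 0 ≤ x ^ (n - 1 - 1) := by
    have he : Even (n - 1 - 1) := by
      rcases hn with ⟨k, rfl⟩; exact ⟨k - 1, by omega⟩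
    exact fun x => he.pow_nonneg x
  have hA : ∀ x : ℝ, 0 ≤ (n:ℝ) * ((n - 1 : ℕ) * x ^ (n - 1 - 1)) :=
    fun x => mul_nonneg (Nat.cast_nonneg _)
      (mul_nonneg (Nat.cast_nonneg _) (hevenpow x))
  -- Lower bound
  have hlow : ∀ p ∈ closure Ω, 0 ≤ φ p - p.1^n - p.2 := by
    apply weak_min_principle ε hε Ω hopen hbox
      (fun q => φ q - q.1^n - q.2)
      (fun q => φx q - (n:ℝ) * q.1^(n-1))
      (fun q => φz q - 1)
      (fun q => φxx q - (n:ℝ) * ((n - 1 : ℕ) * q.1^(n-1-1)))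
      (fun q => φzz q)
    · exact (hφc.sub (Continuous.continuousOn (by fun_prop))).sub
        (Continuous.continuousOn (by fun_prop))
    · intro p hp
      exact ((hφx p hp).sub (hasDerivAt_pow n p.1)).sub_const p.2
    · intro p hp
      exact (hφxx p hp).sub ((hasDerivAt_pow (n-1) p.1).const_mul (n:ℝ))
    · intro p hp
      exact ((hφz p hp).sub_const (p.1^n)).sub (hasDerivAt_id' p.2)
    · intro p hp
      exact (hφzz p hp).sub_const 1
    · intro p hp
      have h1 := hharm p hp
      have h2 := hA p.1
      have h3 := mul_nonneg (le_of_lt (pow_pos hε 2)) h2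
      nlinarith
    · -- boundary
      intro q hq
      rcases hfront q hq with ⟨he, hz⟩ | ⟨he, hz⟩ | ⟨hio, he⟩ | ⟨hio, he⟩
      · rw [he, hbd1 q.2 hz, one_pow]
        ring_nf
        norm_num
      · rw [he, hbd2 q.2 hz, hn.neg_one_pow]
        ring_nf
        norm_num
      · have h1 := hbd3 q.1 (Ioo_subset_Icc_self hio)
        have h2 := (huv q.1 (Ioo_subset_Icc_self hio)).2.2
        have h3 := (hxn q.1 (Ioo_subset_Icc_self hio)).2
        rw [he, h1]
        linarith
      · have h1 := hbd4 q.1 (Ioo_subset_Icc_self hio)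
        have h2 := hvn q.1 hio
        rw [he, h1]
        linarith
  -- Upper bound
  have hup : ∀ p ∈ closure Ω, 0 ≤ 2 + p.2 - p.1^n - φ p := by
    apply weak_min_principle ε hε Ω hopen hbox
      (fun q => 2 + q.2 - q.1^n - φ q)
      (fun q => -((n:ℝ) * q.1^(n-1)) - φx q)
      (fun q => 1 - φz q)
      (fun q => -((n:ℝ) * ((n - 1 : ℕ) * q.1^(n-1-1))) - φxx q)
      (fun q => -(φzz q))
    · exact ((Continuous.continuousOn (by fun_prop)).sub
        (Continuous.continuousOn (by fun_prop))).sub hφc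
    · intro p hp
      have : HasDerivAt (fun t : ℝ => 2 + p.2 - t^n) (-((n:ℝ) * p.1^(n-1))) p.1 := by
        simpa using (hasDerivAt_pow n p.1).const_sub (2 + p.2)
      exact this.sub (hφx p hp)
    · intro p hp
      have : HasDerivAt (fun t : ℝ => -((n:ℝ) * t^(n-1)))
          (-((n:ℝ) * ((n - 1 : ℕ) * p.1^(n-1-1)))) p.1 :=
        ((hasDerivAt_pow (n-1) p.1).const_mul (n:ℝ)).neg
      exact this.sub (hφxx p hp)
    · intro p hp
      have : HasDerivAt (fun t : ℝ => 2 + t - p.1^n) (1:ℝ) p.2 := by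
        simpa using ((hasDerivAt_id' p.2).const_add 2).sub_const (p.1^n)
      exact this.sub (hφz p hp)
    · intro p hp
      exact ((hφzz p hp).const_sub 1).congr_deriv (by ring)
    · intro p hp
      have h1 := hharm p hp
      have h2 := hA p.1
      have h3 := mul_nonneg (le_of_lt (pow_pos hε 2)) h2
      nlinarith
    · intro q hq
      rcases hfront q hq with ⟨he, hz⟩ | ⟨he, hz⟩ | ⟨hio, he⟩ | ⟨hio, he⟩
      · rw [he, hbd1 q.2 hz, one_pow]
        ring_nf
        norm_num
      · rw [he, hbd2 q.2 hz, hn.neg_one_pow]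
        ring_nf
        norm_num
      · have h1 := hbd3 q.1 (Ioo_subset_Icc_self hio)
        have h2 := hun q.1 hio
        rw [he, h1]
        linarith
      · have h1 := hbd4 q.1 (Ioo_subset_Icc_self hio)
        have h2 := (huv q.1 (Ioo_subset_Icc_self hio)).1
        have h3 := (hxn q.1 (Ioo_subset_Icc_self hio)).2
        rw [he, h1]
        linarith
  intro p hp
  exact ⟨by linarith [hlow p hp], by linarith [hup p hp]⟩
end

section
/- If v ∈ C¹([−1,1]) with v ≤ c < 0 and ‖v'‖_∞ ≤ c₀, then there exists an even n ∈ ℕ such that v(x) ≤ −xⁿ for all x ∈ [−1,1]. -/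
/-- If `v ≤ c < 0` on `[-1,1]` with a uniform gradient bound, then `v` lies
below `-xⁿ` for some even `n`. -/
theorem exists_even_power_barrier (v v' : ℝ → ℝ) (c c₀ : ℝ)
    (hc : c < 0) (hc₀ : 0 < c₀)
    (hv : ∀ x ∈ Set.Icc (-1:ℝ) 1, HasDerivAt v (v' x) x)
    (hv' : ∀ x ∈ Set.Icc (-1:ℝ) 1, |v' x| ≤ c₀)
    (hvc : ∀ x ∈ Set.Icc (-1:ℝ) 1, v x ≤ c)
    (hbd : v (-1) = -1 ∧ v 1 = -1) :
    ∃ n : ℕ, Even n ∧ ∀ x ∈ Set.Icc (-1:ℝ) 1, v x ≤ -x^n := by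
  obtain ⟨hbm, hbp⟩ := hbd
  set m : ℕ := ⌈c₀ / (-c)⌉₊ with hm
  set n : ℕ := 2 * m + 2 with hn
  have heven : Even n := ⟨m + 1, by ring⟩
  refine ⟨n, heven, ?_⟩
  have hnc : (0:ℝ) < -c := by linarith
  have hcn : c₀ ≤ (n : ℝ) * (-c) := by
    have h1 : c₀ / (-c) ≤ (m : ℝ) := Nat.le_ceil _
    have h2 : (m : ℝ) ≤ (n : ℝ) := by
      push_cast [hn]
      nlinarith [Nat.cast_nonneg (α := ℝ) m]
    have := (div_le_iff₀ hnc).mp (h1.trans h2)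
    linarith
  have lip : ∀ x ∈ Set.Icc (-1:ℝ) 1, ∀ y ∈ Set.Icc (-1:ℝ) 1,
      ‖v y - v x‖ ≤ c₀ * ‖y - x‖ := fun x hx y hy =>
    (convex_Icc (-1:ℝ) 1).norm_image_sub_le_of_norm_hasDerivWithin_le
      (fun z hz => (hv z hz).hasDerivWithinAt)
      (fun z hz => by simpa [Real.norm_eq_abs] using hv' z hz) hx hy
  intro x hx
  obtain ⟨hx1, hx2⟩ := hx
  by_cases hcase : x ^ n ≤ -c
  · have := hvc x ⟨hx1, hx2⟩
    linarith
  push_neg at hcase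
  have habs : |x| ≤ 1 := abs_le.mpr ⟨hx1, hx2⟩
  have habs0 : (0:ℝ) ≤ |x| := abs_nonneg x
  have hxn : x ^ n = |x| ^ n := (heven.pow_abs x).symm
  -- upper bound near the boundary
  have hub : v x ≤ -1 + c₀ * (1 - |x|) := by
    rcases le_or_gt 0 x with h | h
    · have h1 := lip 1 (by norm_num) x ⟨hx1, hx2⟩
      rw [hbp, Real.norm_eq_abs, Real.norm_eq_abs] at h1
      have h2 : v x - (-1) ≤ |v x - (-1)| := le_abs_self _
      have h3 : |x - 1| = 1 - x := by
        rw [abs_of_nonpos (by linarith)]; ring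
      rw [h3] at h1
      rw [abs_of_nonneg h]
      linarith
    · have h1 := lip (-1) (by norm_num) x ⟨hx1, hx2⟩
      rw [hbm, Real.norm_eq_abs, Real.norm_eq_abs] at h1
      have h2 : v x - (-1) ≤ |v x - (-1)| := le_abs_self _
      have h3 : |x - (-1)| = 1 + x := by
        rw [abs_of_nonneg (by linarith)]; ring
      rw [h3] at h1
      rw [abs_of_neg h]
      linarith
  -- geometric sum estimate
  have hpow : -c ≤ |x| ^ (n - 1) := by
    have h1 : |x| ^ n ≤ |x| ^ (n - 1) :=
      pow_le_pow_of_le_one habs0 habs (Nat.sub_le n 1)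
    rw [← hxn] at h1
    linarith
  have hsum : (n : ℝ) * (-c) ≤ ∑ i ∈ Finset.range n, |x| ^ i := by
    calc (n : ℝ) * (-c) ≤ (n : ℝ) * |x| ^ (n - 1) := by
          apply mul_le_mul_of_nonneg_left hpow (Nat.cast_nonneg n)
      _ ≤ ∑ i ∈ Finset.range n, |x| ^ i := by
          have := Finset.card_nsmul_le_sum (Finset.range n)
            (fun i => |x| ^ i) (|x| ^ (n - 1))
            (fun i hi => pow_le_pow_of_le_one habs0 habs
              (Nat.le_sub_one_of_lt (Finset.mem_range.mp hi)))
          simpa [nsmul_eq_mul] using this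
  have hgeom : (∑ i ∈ Finset.range n, |x| ^ i) * (1 - |x|) = 1 - |x| ^ n := by
    have := geom_sum_mul (|x|) n
    nlinarith [this]
  have h1x : (0:ℝ) ≤ 1 - |x| := by linarith
  have key : c₀ * (1 - |x|) ≤ 1 - |x| ^ n := by
    rw [← hgeom]
    apply mul_le_mul_of_nonneg_right _ h1x
    linarith
  rw [hxn]
  linarith
end
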